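/- Let −3 < ϱ < 0, let b₀ : [−1,1] → [0,∞) be measurable with b₀(s) ≤ C₀·max(s,0) for all s and some C₀ > 0, let q > 0 and 0 < θ ≤ 2 (with 0 < q < 1 when θ = 2), let ϑ ≥ 0 and l ≥ 0. Then there exist C > 0 and δ > 0, independent of t, ε and χ, such that for every 0 < ε ≤ 1, every measurable χ : [0,∞) → [0,1] with χ(s) = 0 for s ≤ ε and χ(s) = 1 for s ≥ 2ε, every bounded measurable h : ℝ³ → ℝ, every t ≥ 0 and every v ∈ ℝ³: (1+|v|²)^{l/2} w_{q,θ,ϑ}(t,v) |K^{1−χ}(g)(v)| ≤ C ε^{ϱ+3} e^{−δ|v|²} · sup_{u∈ℝ³} |h(u)|, where g(u) = h(u)/((1+|u|²)^{l/2} w_{q,θ,ϑ}(t,u)). -/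

import Mathlib

open MeasureTheory

noncomputable section

/-- Velocity space `ℝ³`. -/
abbrev V3 : Type := EuclideanSpace ℝ (Fin 3)

/-- Normalized global Maxwellian `μ(v) = (2π)⁻¹ e^{-|v|²/2}`. -/
def maxwellian (v : V3) : ℝ := (2 * Real.pi)⁻¹ * Real.exp (-‖v‖ ^ 2 / 2)

/-- Post-collisional velocity `v′ = v + ((u-v)·ω)ω`. -/
def vPost (u v ω : V3) : V3 := v + (inner ℝ (u - v) ω : ℝ) • ω

/-- Post-collisional velocity `u′ = u - ((u-v)·ω)ω`. -/
def uPost (u v ω : V3) : V3 := u - (inner ℝ (u - v) ω : ℝ) • ω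

/-- Time–velocity weight `w_{q,θ,ϑ}(t,v) = exp(q|v|^θ/8 + q|v|^θ/(8(1+t)^ϑ))`. -/
def wt (q θ ϑ t : ℝ) (v : V3) : ℝ :=
  Real.exp (q * ‖v‖ ^ θ / 8 + q * ‖v‖ ^ θ / (8 * (1 + t) ^ ϑ))

/-- Surface measure on the unit sphere `S² ⊂ ℝ³`. -/
def sphMeasure : Measure (Metric.sphere (0 : V3) 1) := (volume : Measure V3).toSphere

/-- Nonlinear Boltzmann collision operator in the perturbation variable,
`Γ(f₁,f₂)(v) = ∫∫ |v-u|^ϱ b₀(cos θ) √μ(u) [f₁(u′)f₂(v′) - f₁(u)f₂(v)] dω du`. -/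
def GamOp (ϱ : ℝ) (b₀ : ℝ → ℝ) (f₁ f₂ : V3 → ℝ) (v : V3) : ℝ :=
  ∫ u : V3, ∫ ω : Metric.sphere (0 : V3) 1,
      ‖v - u‖ ^ ϱ * b₀ ((inner ℝ (ω : V3) (u - v) : ℝ) / ‖u - v‖) *
        Real.sqrt (maxwellian u) *
        (f₁ (uPost u v (ω : V3)) * f₂ (vPost u v (ω : V3)) - f₁ u * f₂ v) ∂sphMeasure


/-- Near-singularity part `K^{1-χ}` of the linearized collision operator, for a
radial cutoff `χ`. -/
def K1mChi (ϱ : ℝ) (b₀ χ : ℝ → ℝ) (f : V3 → ℝ) (v : V3) : ℝ :=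
  ∫ u : V3, ∫ ω : Metric.sphere (0 : V3) 1,
      (1 - χ ‖u - v‖) * ‖u - v‖ ^ ϱ *
        b₀ ((inner ℝ (ω : V3) (u - v) : ℝ) / ‖u - v‖) * Real.sqrt (maxwellian u) *
        (f (uPost u v (ω : V3)) * Real.sqrt (maxwellian (vPost u v (ω : V3)))
          + f (vPost u v (ω : V3)) * Real.sqrt (maxwellian (uPost u v (ω : V3)))
          - f u * Real.sqrt (maxwellian v)) ∂sphMeasure



lemma aux_ball (ϱ : ℝ) (hϱ₁ : -3 < ϱ) (hϱ₂ : ϱ < 0) (v : V3) (R : ℝ) (hR : 0 < R) :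
    Integrable (Set.indicator (Metric.ball v R) (fun u => ‖u - v‖ ^ ϱ)) (volume : Measure V3) ∧
    ∫ u : V3, Set.indicator (Metric.ball v R) (fun u => ‖u - v‖ ^ ϱ) u =
      3 * (volume (Metric.ball (0:V3) 1)).toReal * (R ^ (ϱ + 3) / (ϱ + 3)) := by
  have hϱ3 : 0 < ϱ + 3 := by linarith
  set f : ℝ → ℝ := Set.indicator (Set.Ioo 0 R) (fun y => y ^ ϱ) with hf
  have hfeq : ∀ u : V3, Set.indicator (Metric.ball v R) (fun u => ‖u - v‖ ^ ϱ) u = f ‖u - v‖ := by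
    intro u
    by_cases h1 : u ∈ Metric.ball v R
    · rw [Set.indicator_of_mem h1]
      have hlt : ‖u - v‖ < R := by rwa [Metric.mem_ball, dist_eq_norm] at h1
      by_cases h0 : ‖u - v‖ = 0
      · rw [h0, hf]
        simp [Real.zero_rpow (ne_of_lt hϱ₂), Set.indicator_apply, lt_irrefl]
      · have hmem : ‖u - v‖ ∈ Set.Ioo 0 R :=
          ⟨lt_of_le_of_ne (norm_nonneg _) (Ne.symm h0), hlt⟩
        rw [hf, Set.indicator_of_mem hmem]
    · rw [Set.indicator_of_notMem h1]
      have hnmem : ¬ (‖u - v‖ ∈ Set.Ioo 0 R) := fun hmem =>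
        h1 (by rw [Metric.mem_ball, dist_eq_norm]; exact hmem.2)
      rw [hf, Set.indicator_of_notMem hnmem]
  have hval : ∫ x : V3, f ‖x‖ =
      3 * (volume (Metric.ball (0:V3) 1)).toReal * (R ^ (ϱ+3)/(ϱ+3)) := by
    rw [MeasureTheory.integral_fun_norm_addHaar (volume : Measure V3) f]
    have hdim : Module.finrank ℝ V3 = 3 := by simp
    rw [hdim]
    have hinner : ∫ y in Set.Ioi (0:ℝ), y ^ (3 - 1) • f y = R ^ (ϱ+3)/(ϱ+3) := by
      have h1 : ∫ y in Set.Ioi (0:ℝ), y ^ (3-1) • f y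
          = ∫ y in Set.Ioo (0:ℝ) R, y ^ (2:ℕ) * y ^ ϱ := by
        rw [show (3-1 : ℕ) = 2 from rfl]
        have : ∀ y : ℝ, y ^ (2:ℕ) • f y
            = Set.indicator (Set.Ioo 0 R) (fun y => y ^ (2:ℕ) * y ^ ϱ) y := by
          intro y
          by_cases hy : y ∈ Set.Ioo (0:ℝ) R
          · rw [hf, Set.indicator_of_mem hy, Set.indicator_of_mem hy]; simp [smul_eq_mul]
          · rw [hf, Set.indicator_of_notMem hy, Set.indicator_of_notMem hy]; simp
        simp_rw [this]
        rw [setIntegral_indicator measurableSet_Ioo]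
        rw [show Set.Ioi (0:ℝ) ∩ Set.Ioo 0 R = Set.Ioo 0 R by
          rw [Set.Ioi_inter_Ioo]; norm_num]
      rw [h1]
      have h2 : ∀ y ∈ Set.Ioo (0:ℝ) R, y ^ (2:ℕ) * y ^ ϱ = y ^ (ϱ + 2) := by
        intro y hy
        rw [← Real.rpow_natCast y 2, ← Real.rpow_add hy.1]
        ring_nf
      rw [setIntegral_congr_fun measurableSet_Ioo h2]
      rw [← integral_Ioc_eq_integral_Ioo, ← intervalIntegral.integral_of_le hR.le]
      rw [integral_rpow (Or.inl (by linarith))]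
      rw [show ϱ + 2 + 1 = ϱ + 3 by ring, Real.zero_rpow hϱ3.ne', sub_zero]
    rw [hinner]
    simp only [smul_eq_mul, measureReal_def, nsmul_eq_mul, Nat.cast_ofNat]
    ring
  have hneq : (3:ℝ) * (volume (Metric.ball (0:V3) 1)).toReal * (R ^ (ϱ+3)/(ϱ+3)) ≠ 0 := by
    have hpos : 0 < (volume (Metric.ball (0:V3) 1)).toReal :=
      ENNReal.toReal_pos (Metric.measure_ball_pos volume 0 one_pos).ne' measure_ball_lt_top.ne
    have : 0 < R ^ (ϱ+3) := Real.rpow_pos_of_pos hR _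
    positivity
  have hint : Integrable (fun u : V3 => f ‖u - v‖) volume := by
    by_contra hni
    rw [show (fun u : V3 => f ‖u - v‖) = (fun u : V3 => (fun x => f ‖x‖) (u - v)) from rfl] at hni
    have := integral_undef hni
    rw [integral_sub_right_eq_self (fun x : V3 => f ‖x‖) v] at this
    rw [hval] at this
    exact hneq this
  constructor
  · simpa [← hfeq] using hint
  · calc ∫ u : V3, Set.indicator (Metric.ball v R) (fun u => ‖u - v‖ ^ ϱ) u
        = ∫ u : V3, f ‖u - v‖ := by simp_rw [hfeq]
      _ = ∫ x : V3, f ‖x‖ := integral_sub_right_eq_self (fun x : V3 => f ‖x‖) v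
      _ = _ := hval


lemma aux_expA (q θ l : ℝ) (hq : 0 < q) (hθ₁ : 0 < θ) (hθ₂ : θ ≤ 2)
    (hqθ : θ = 2 → q < 1) (hl : 0 ≤ l) :
    ∃ δ Ca : ℝ, 0 < δ ∧ 0 < Ca ∧ ∀ x : ℝ, 0 ≤ x →
      (1 + x ^ 2) ^ (l / 2) * Real.exp (q * x ^ θ / 4 + x - x ^ 2 / 4) ≤
        Ca * Real.exp (-δ * x ^ 2) := by
  obtain ⟨δ, c₁, hδ, hc₁, hB⟩ :
      ∃ δ c₁ : ℝ, 0 < δ ∧ 0 ≤ c₁ ∧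
        ∀ x : ℝ, 0 ≤ x → q * x ^ θ / 4 ≤ (1/4 - 2*δ) * x ^ 2 + c₁ := by
    by_cases h2 : θ = 2
    · refine ⟨(1 - q)/8, 0, by linarith [hqθ h2], le_refl 0, ?_⟩
      intro x hx
      subst h2
      have hx2 : x ^ (2:ℝ) = x ^ 2 := by
        rw [show (2:ℝ) = ((2:ℕ):ℝ) by norm_num, Real.rpow_natCast]
      rw [hx2]
      nlinarith [sq_nonneg x]
    · have hθlt : θ < 2 := lt_of_le_of_ne hθ₂ h2
      set R : ℝ := max 1 ((4*q) ^ (1/(2-θ))) with hRdef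
      have hR1 : (1:ℝ) ≤ R := le_max_left _ _
      have hR0 : (0:ℝ) ≤ R := by linarith
      refine ⟨1/16, q * R ^ θ / 4, by norm_num, by positivity, ?_⟩
      intro x hx
      by_cases hxR : x ≤ R
      · have hxx : x ^ θ ≤ R ^ θ := Real.rpow_le_rpow hx hxR hθ₁.le
        nlinarith [sq_nonneg x]
      · push_neg at hxR
        have hx0 : 0 < x := lt_of_le_of_lt (by norm_num : (0:ℝ) ≤ 1) (lt_of_le_of_lt hR1 hxR)
        have hpow : 4 * q ≤ x ^ (2 - θ) := by
          have h1 : (4*q) ^ (1/(2-θ)) ≤ R := le_max_right _ _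
          have h2' : R ^ (2-θ) ≤ x ^ (2-θ) :=
            Real.rpow_le_rpow hR0 hxR.le (by linarith)
          have h3 : ((4*q) ^ (1/(2-θ))) ^ (2-θ) ≤ R ^ (2-θ) :=
            Real.rpow_le_rpow (Real.rpow_nonneg (by positivity) _) h1 (by linarith)
          rw [← Real.rpow_mul (by positivity), one_div,
            inv_mul_cancel₀ (by intro hc; apply h2; linarith : (2:ℝ)-θ ≠ 0),
            Real.rpow_one] at h3
          linarith
        have hxθ : x ^ θ = x ^ 2 * x ^ (θ - 2) := by
          rw [← Real.rpow_natCast x 2, ← Real.rpow_add hx0]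
          norm_num
        have hx2 : x ^ (θ-2) = (x ^ (2-θ))⁻¹ := by
          rw [← Real.rpow_neg hx0.le]
          norm_num
        have hb : x ^ (θ-2) ≤ (4*q)⁻¹ := by
          rw [hx2]
          exact inv_anti₀ (by positivity) hpow
        have hc : q * x ^ θ / 4 ≤ x^2/16 := by
          rw [hxθ]
          have h4 : x^2 * x^(θ-2) ≤ x^2 * (4*q)⁻¹ :=
            mul_le_mul_of_nonneg_left hb (by positivity)
          calc q * (x^2 * x^(θ-2)) / 4 ≤ q * (x^2 * (4*q)⁻¹) / 4 := by
                have := mul_le_mul_of_nonneg_left h4 hq.le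
                linarith
            _ = x^2/16 := by field_simp; ring
        have hR' : 0 ≤ q * R ^ θ / 4 := by positivity
        nlinarith [sq_nonneg x]
  refine ⟨δ, Real.exp (c₁ + (l+1)^2/(4*δ)), hδ, Real.exp_pos _, ?_⟩
  intro x hx
  have h1 : (1 + x^2) ^ (l/2) ≤ Real.exp (l * x) := by
    rw [Real.rpow_def_of_pos (by positivity)]
    apply Real.exp_le_exp.2
    have hlog : Real.log (1 + x^2) ≤ 2 * x := by
      have h1x : Real.log (1 + x^2) ≤ Real.log ((1+x)^2) := by
        apply Real.log_le_log (by positivity)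
        nlinarith
      rw [Real.log_pow] at h1x
      have h2x := Real.log_le_sub_one_of_pos (show (0:ℝ) < 1 + x by linarith)
      push_cast at h1x
      nlinarith
    nlinarith [Real.log_nonneg (show (1:ℝ) ≤ 1 + x^2 by nlinarith)]
  have hA : (l+1)^2/(4*δ) * (4*δ) = (l+1)^2 := div_mul_cancel₀ _ (by positivity)
  calc (1+x^2)^(l/2) * Real.exp (q*x^θ/4 + x - x^2/4)
      ≤ Real.exp (l*x) * Real.exp (q*x^θ/4 + x - x^2/4) :=
        mul_le_mul_of_nonneg_right h1 (Real.exp_nonneg _)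
    _ = Real.exp (l*x + (q*x^θ/4 + x - x^2/4)) := (Real.exp_add _ _).symm
    _ ≤ Real.exp ((c₁ + (l+1)^2/(4*δ)) + (-δ * x^2)) := by
        apply Real.exp_le_exp.2
        nlinarith [sq_nonneg (2*δ*x - (l+1)), hB x hx, hδ]
    _ = Real.exp (c₁ + (l+1)^2/(4*δ)) * Real.exp (-δ*x^2) := Real.exp_add _ _

lemma sqrt_maxwellian_eq (u : V3) :
    Real.sqrt (maxwellian u) = Real.sqrt ((2*Real.pi)⁻¹) * Real.exp (-‖u‖^2/4) := by
  unfold maxwellian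
  rw [Real.sqrt_mul (by positivity : (0:ℝ) ≤ (2*Real.pi)⁻¹)]
  congr 1
  have hh : Real.exp (-‖u‖^2/2) = Real.exp (-‖u‖^2/4) * Real.exp (-‖u‖^2/4) := by
    rw [← Real.exp_add]; congr 1; ring
  rw [hh, Real.sqrt_mul_self (Real.exp_nonneg _)]

lemma sqrt_maxwellian_le (u : V3) :
    Real.sqrt (maxwellian u) ≤ Real.sqrt ((2*Real.pi)⁻¹) := by
  rw [sqrt_maxwellian_eq]
  nth_rewrite 2 [← mul_one (Real.sqrt ((2*Real.pi)⁻¹))]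
  apply mul_le_mul_of_nonneg_left _ (Real.sqrt_nonneg _)
  exact Real.exp_le_one_iff.mpr (by nlinarith [sq_nonneg ‖u‖])

set_option maxHeartbeats 2000000 in
/-- Smallness of the near-singularity part `K^{1-χ}` (Lemma 2.2, (2.5)):
`⟨v⟩^l w K^{1-χ}(h/(⟨·⟩^l w)) ≤ C ε^{ϱ+3} e^{-δ|v|²} ‖h‖_∞`. -/
theorem K_one_minus_chi_smallness
    (ϱ : ℝ) (hϱ₁ : -3 < ϱ) (hϱ₂ : ϱ < 0)
    (b₀ : ℝ → ℝ) (hb₀meas : Measurable b₀) (hb₀nonneg : ∀ s, 0 ≤ b₀ s)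
    (C₀ : ℝ) (hC₀ : 0 < C₀) (hb₀le : ∀ s, b₀ s ≤ C₀ * max s 0)
    (q θ ϑ l : ℝ) (hq : 0 < q) (hθ₁ : 0 < θ) (hθ₂ : θ ≤ 2)
    (hqθ : θ = 2 → q < 1) (hϑ : 0 ≤ ϑ) (hl : 0 ≤ l) :
    ∃ C δ : ℝ, 0 < C ∧ 0 < δ ∧
      ∀ ε : ℝ, 0 < ε → ε ≤ 1 →
        ∀ χ : ℝ → ℝ, Measurable χ →
          (∀ s, 0 ≤ χ s ∧ χ s ≤ 1) →
          (∀ s, s ≤ ε → χ s = 0) → (∀ s, 2 * ε ≤ s → χ s = 1) →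
          ∀ h : V3 → ℝ, Measurable h →
            ∀ M : ℝ, (∀ u : V3, |h u| ≤ M) →
              ∀ t : ℝ, 0 ≤ t → ∀ v : V3,
                (1 + ‖v‖ ^ 2) ^ (l / 2) * wt q θ ϑ t v *
                    |K1mChi ϱ b₀ χ
                      (fun u => h u / ((1 + ‖u‖ ^ 2) ^ (l / 2) * wt q θ ϑ t u)) v| ≤
                  C * ε ^ (ϱ + 3) * Real.exp (-δ * ‖v‖ ^ 2) * M := by
    classical
  obtain ⟨δ, Ca, hδ, hCa, hA⟩ := aux_expA q θ l hq hθ₁ hθ₂ hqθ hl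
  set P : ℝ := Real.sqrt ((2*Real.pi)⁻¹) with hPdef
  have hP0 : 0 ≤ P := Real.sqrt_nonneg _
  set volB : ℝ := (volume (Metric.ball (0:V3) 1)).toReal with hvolBdef
  have hvolB0 : 0 ≤ volB := ENNReal.toReal_nonneg
  haveI hFin : IsFiniteMeasure sphMeasure := by unfold sphMeasure; infer_instance
  set S : ℝ := (sphMeasure Set.univ).toReal with hSdef
  have hS0 : 0 ≤ S := ENNReal.toReal_nonneg
  have hϱ3 : 0 < ϱ + 3 := by linarith
  refine ⟨3 * volB / (ϱ+3) * 2^(ϱ+3) * S * 3 * C₀ * P^2 * Ca + 1, δ, ?_, hδ, ?_⟩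
  · have h2p : (0:ℝ) < 2^(ϱ+3) := Real.rpow_pos_of_pos (by norm_num) _
    positivity
  intro ε hε hε1 χ hχm hχ01 hχ0 hχ1 h hhm M hM t ht v
  have hM0 : 0 ≤ M := le_trans (abs_nonneg _) (hM 0)
  set g : V3 → ℝ := fun u => h u / ((1 + ‖u‖ ^ 2) ^ (l / 2) * wt q θ ϑ t u) with hgdef
  -- the function g is bounded by M
  have hg : ∀ u : V3, |g u| ≤ M := by
    intro u
    rw [hgdef]
    simp only
    have h1 : (1:ℝ) ≤ (1 + ‖u‖ ^ 2) ^ (l / 2) :=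
      Real.one_le_rpow (by nlinarith [sq_nonneg ‖u‖]) (by linarith)
    have h2 : (1:ℝ) ≤ wt q θ ϑ t u := by
      apply Real.one_le_exp
      have hxθ : 0 ≤ ‖u‖ ^ θ := Real.rpow_nonneg (norm_nonneg _) _
      have ht' : (0:ℝ) < (1+t) ^ ϑ := Real.rpow_pos_of_pos (by linarith) _
      positivity
    have hD : (1:ℝ) ≤ (1 + ‖u‖ ^ 2) ^ (l / 2) * wt q θ ϑ t u := by nlinarith
    rw [abs_div, abs_of_nonneg (by linarith : (0:ℝ) ≤ (1 + ‖u‖ ^ 2) ^ (l / 2) * wt q θ ϑ t u)]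
    exact le_trans (div_le_self (abs_nonneg _) hD) (hM u)
  -- pointwise bound for sqrt(maxwellian u) on the ball
  set E : ℝ := Real.exp (‖v‖ - ‖v‖^2/4) with hEdef
  have hE0 : 0 ≤ E := Real.exp_nonneg _
  have hsqmu : ∀ u : V3, u ∈ Metric.ball v (2*ε) → Real.sqrt (maxwellian u) ≤ P * E := by
    intro u hu
    rw [sqrt_maxwellian_eq]
    apply mul_le_mul_of_nonneg_left _ hP0
    apply Real.exp_le_exp.2
    have h1 : ‖v‖ - ‖u‖ ≤ ‖u - v‖ := by
      rw [norm_sub_rev]; exact norm_sub_norm_le v u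
    have h2 : ‖u - v‖ < 2 := by
      rw [Metric.mem_ball, dist_eq_norm] at hu
      linarith
    have h3 : ‖v‖ ≤ ‖u‖ + 2 := by linarith
    rcases le_or_gt ‖v‖ 2 with hc | hc
    · nlinarith [norm_nonneg u, norm_nonneg v]
    · have h4 : (‖v‖-2)^2 ≤ ‖u‖^2 := pow_le_pow_left₀ (by linarith) (by linarith) 2
      nlinarith
  -- bound for the bracket
  have hBr : ∀ a b c d e : V3,
      |g a * Real.sqrt (maxwellian b) + g c * Real.sqrt (maxwellian d)
        - g e * Real.sqrt (maxwellian v)| ≤ 3 * (P * M) := by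
    intro a b c d e
    have e1 : ∀ x y : V3, |g x * Real.sqrt (maxwellian y)| ≤ P * M := by
      intro x y
      rw [abs_mul, abs_of_nonneg (Real.sqrt_nonneg _)]
      calc |g x| * Real.sqrt (maxwellian y)
          ≤ M * P := mul_le_mul (hg x) (sqrt_maxwellian_le y) (Real.sqrt_nonneg _) hM0
        _ = P * M := by ring
    calc |g a * Real.sqrt (maxwellian b) + g c * Real.sqrt (maxwellian d)
        - g e * Real.sqrt (maxwellian v)|
        ≤ |g a * Real.sqrt (maxwellian b) + g c * Real.sqrt (maxwellian d)|
          + |g e * Real.sqrt (maxwellian v)| := abs_sub _ _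
      _ ≤ |g a * Real.sqrt (maxwellian b)| + |g c * Real.sqrt (maxwellian d)|
          + |g e * Real.sqrt (maxwellian v)| := by
          have := abs_add_le (g a * Real.sqrt (maxwellian b)) (g c * Real.sqrt (maxwellian d))
          linarith
      _ ≤ P * M + (P * M) + (P * M) := by
          have := e1 a b; have := e1 c d; have := e1 e v; linarith
      _ = 3 * (P * M) := by ring
  -- bound for b₀
  have hb₀b : ∀ (ω : Metric.sphere (0:V3) 1) (u : V3),
      b₀ ((inner ℝ (ω : V3) (u - v) : ℝ) / ‖u - v‖) ≤ C₀ := by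
    intro ω u
    have hs1 : (inner ℝ (ω : V3) (u - v) : ℝ) / ‖u - v‖ ≤ 1 := by
      rcases eq_or_lt_of_le (norm_nonneg (u - v)) with h0 | h0
      · rw [← h0, div_zero]; norm_num
      · rw [div_le_one h0]
        calc (inner ℝ (ω : V3) (u - v) : ℝ) ≤ |(inner ℝ (ω : V3) (u - v) : ℝ)| := le_abs_self _
          _ ≤ ‖(ω : V3)‖ * ‖u - v‖ := abs_real_inner_le_norm _ _
          _ = ‖u - v‖ := by rw [norm_eq_of_mem_sphere ω, one_mul]
    calc b₀ ((inner ℝ (ω : V3) (u - v) : ℝ) / ‖u - v‖)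
        ≤ C₀ * max ((inner ℝ (ω : V3) (u - v) : ℝ) / ‖u - v‖) 0 := hb₀le _
      _ ≤ C₀ * 1 := mul_le_mul_of_nonneg_left (max_le hs1 zero_le_one) hC₀.le
      _ = C₀ := mul_one _
  -- the main integral bound
  set Kc : ℝ := C₀ * (P * E) * (3 * (P * M)) with hKcdef
  have hKc0 : 0 ≤ Kc := by positivity
  have hKb : |K1mChi ϱ b₀ χ g v| ≤ 3 * volB * ((2*ε) ^ (ϱ+3)/(ϱ+3)) * (Kc * S) := by
    have hball := aux_ball ϱ hϱ₁ hϱ₂ v (2*ε) (by linarith)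
    unfold K1mChi
    rw [← Real.norm_eq_abs]
    have hval2 : (∫ u : V3, Set.indicator (Metric.ball v (2*ε))
          (fun u => ‖u - v‖ ^ ϱ) u * (Kc * S))
        = 3 * volB * ((2*ε) ^ (ϱ+3)/(ϱ+3)) * (Kc * S) := by
      rw [MeasureTheory.integral_mul_const, hball.2, hvolBdef]
    have hmid : (∫ u : V3, ‖∫ ω : Metric.sphere (0 : V3) 1,
            (1 - χ ‖u - v‖) * ‖u - v‖ ^ ϱ *
            b₀ ((inner ℝ (ω : V3) (u - v) : ℝ) / ‖u - v‖) * Real.sqrt (maxwellian u) *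
            (g (uPost u v (ω : V3)) * Real.sqrt (maxwellian (vPost u v (ω : V3)))
            + g (vPost u v (ω : V3)) * Real.sqrt (maxwellian (uPost u v (ω : V3)))
            - g u * Real.sqrt (maxwellian v)) ∂sphMeasure‖)
          ≤ ∫ u : V3, Set.indicator (Metric.ball v (2*ε)) (fun u => ‖u - v‖ ^ ϱ) u * (Kc * S) := by
      apply integral_mono_of_nonneg
      · exact Filter.Eventually.of_forall (fun u => norm_nonneg _)
      · exact hball.1.mul_const _
      · apply Filter.Eventually.of_forall
        intro u
        simp only
        -- uniform bound on the inner integral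
        have hptw : ∀ ω : Metric.sphere (0:V3) 1,
            ‖(1 - χ ‖u - v‖) * ‖u - v‖ ^ ϱ *
            b₀ ((inner ℝ (ω : V3) (u - v) : ℝ) / ‖u - v‖) * Real.sqrt (maxwellian u) *
            (g (uPost u v (ω : V3)) * Real.sqrt (maxwellian (vPost u v (ω : V3)))
            + g (vPost u v (ω : V3)) * Real.sqrt (maxwellian (uPost u v (ω : V3)))
            - g u * Real.sqrt (maxwellian v))‖
            ≤ Set.indicator (Metric.ball v (2*ε)) (fun u => ‖u - v‖ ^ ϱ) u * Kc := by
          intro ω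
          by_cases hu : u ∈ Metric.ball v (2*ε)
          · rw [Set.indicator_of_mem hu]
            have hrϱ : (0:ℝ) ≤ ‖u - v‖ ^ ϱ := Real.rpow_nonneg (norm_nonneg _) _
            rw [Real.norm_eq_abs, abs_mul, abs_mul, abs_mul, abs_mul,
              abs_of_nonneg hrϱ, abs_of_nonneg (hb₀nonneg _),
              abs_of_nonneg (Real.sqrt_nonneg _)]
            have f1 : |1 - χ ‖u - v‖| ≤ 1 := by
              rw [abs_le]
              constructor <;> linarith [(hχ01 ‖u - v‖).1, (hχ01 ‖u - v‖).2]
            have hAb : |g (uPost u v (ω : V3)) *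
                Real.sqrt (maxwellian (vPost u v (ω : V3)))
            + g (vPost u v (ω : V3)) * Real.sqrt (maxwellian (uPost u v (ω : V3)))
            - g u * Real.sqrt (maxwellian v)| ≤ 3 * (P * M) :=
              hBr (uPost u v (ω : V3)) (vPost u v (ω : V3)) (vPost u v (ω : V3))
                (uPost u v (ω : V3)) u
            have hKceq : (1:ℝ) * ‖u - v‖ ^ ϱ * C₀ * (P*E) * (3*(P*M))
                = ‖u - v‖ ^ ϱ * Kc := by rw [hKcdef]; ring
            refine le_trans ?_ (le_of_eq hKceq)
            gcongr <;> first
              | exact hb₀nonneg _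
              | exact Real.sqrt_nonneg _
              | exact f1
              | exact hb₀b ω u
              | exact hsqmu u hu
              | exact hAb
          · rw [Set.indicator_of_notMem hu]
            have hr : 2*ε ≤ ‖u - v‖ := by
              rw [Metric.mem_ball, dist_eq_norm, not_lt] at hu
              exact hu
            rw [hχ1 _ hr, sub_self, zero_mul, zero_mul, zero_mul, zero_mul,
              norm_zero, zero_mul]
        refine le_trans
          (norm_integral_le_of_norm_le_const (Filter.Eventually.of_forall hptw))
          (le_of_eq ?_)
        rw [measureReal_def, ← hSdef]
        ring
    exact le_trans (norm_integral_le_integral_norm _) (le_trans hmid (le_of_eq hval2))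
  -- weight bound
  have hW0 : 0 ≤ (1 + ‖v‖ ^ 2) ^ (l / 2) * wt q θ ϑ t v := by
    have := Real.exp_nonneg (q * ‖v‖ ^ θ / 8 + q * ‖v‖ ^ θ / (8 * (1 + t) ^ ϑ))
    have h1 : (0:ℝ) ≤ (1 + ‖v‖ ^ 2) ^ (l / 2) := Real.rpow_nonneg (by positivity) _
    unfold wt
    positivity
  have hWE : (1 + ‖v‖ ^ 2) ^ (l / 2) * wt q θ ϑ t v * E ≤ Ca * Real.exp (-δ * ‖v‖^2) := by
    have hwtle : wt q θ ϑ t v ≤ Real.exp (q * ‖v‖ ^ θ / 4) := by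
      unfold wt
      apply Real.exp_le_exp.2
      have hxθ : 0 ≤ q * ‖v‖ ^ θ := by positivity
      have ht1 : (1:ℝ) ≤ (1+t) ^ ϑ := Real.one_le_rpow (by linarith) hϑ
      have := div_le_div_of_nonneg_left hxθ (by norm_num : (0:ℝ) < 8)
        (by nlinarith : (8:ℝ) ≤ 8 * (1+t) ^ ϑ)
      linarith
    calc (1 + ‖v‖ ^ 2) ^ (l / 2) * wt q θ ϑ t v * E
        ≤ (1 + ‖v‖ ^ 2) ^ (l / 2) * Real.exp (q * ‖v‖ ^ θ / 4) * E := by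
          have h1 : (0:ℝ) ≤ (1 + ‖v‖ ^ 2) ^ (l / 2) := Real.rpow_nonneg (by positivity) _
          apply mul_le_mul_of_nonneg_right _ hE0
          exact mul_le_mul_of_nonneg_left hwtle h1
      _ = (1 + ‖v‖ ^ 2) ^ (l / 2) * Real.exp (q * ‖v‖ ^ θ / 4 + ‖v‖ - ‖v‖^2/4) := by
          rw [hEdef, mul_assoc, ← Real.exp_add]
          congr 2
          ring
      _ ≤ Ca * Real.exp (-δ * ‖v‖^2) := by
          have := hA ‖v‖ (norm_nonneg v)
          calc (1 + ‖v‖ ^ 2) ^ (l / 2) * Real.exp (q * ‖v‖ ^ θ / 4 + ‖v‖ - ‖v‖^2/4)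
              = (1 + ‖v‖ ^ 2) ^ (l / 2) *
                Real.exp (q * ‖v‖ ^ θ / 4 + ‖v‖ - ‖v‖ ^ 2 / 4) := rfl
            _ ≤ Ca * Real.exp (-δ * ‖v‖^2) := this
  -- final assembly
  have h2e : (2*ε) ^ (ϱ+3) = 2 ^ (ϱ+3) * ε ^ (ϱ+3) :=
    Real.mul_rpow (by norm_num) hε.le
  have h2p : (0:ℝ) < 2^(ϱ+3) := Real.rpow_pos_of_pos (by norm_num) _
  have hεp : (0:ℝ) ≤ ε ^ (ϱ+3) := Real.rpow_nonneg hε.le _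
  calc (1 + ‖v‖ ^ 2) ^ (l / 2) * wt q θ ϑ t v * |K1mChi ϱ b₀ χ g v|
      ≤ (1 + ‖v‖ ^ 2) ^ (l / 2) * wt q θ ϑ t v *
        (3 * volB * ((2*ε) ^ (ϱ+3)/(ϱ+3)) * (Kc * S)) :=
        mul_le_mul_of_nonneg_left hKb hW0
    _ = (3 * volB / (ϱ+3) * 2^(ϱ+3) * S * 3 * C₀ * P^2 * ε ^ (ϱ+3) * M) *
        ((1 + ‖v‖ ^ 2) ^ (l / 2) * wt q θ ϑ t v * E) := by
        rw [hKcdef, h2e]; ring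
    _ ≤ (3 * volB / (ϱ+3) * 2^(ϱ+3) * S * 3 * C₀ * P^2 * ε ^ (ϱ+3) * M) *
        (Ca * Real.exp (-δ * ‖v‖^2)) := by
        apply mul_le_mul_of_nonneg_left hWE
        positivity
    _ = (3 * volB / (ϱ+3) * 2^(ϱ+3) * S * 3 * C₀ * P^2 * Ca) * ε ^ (ϱ+3) *
        Real.exp (-δ * ‖v‖^2) * M := by ring
    _ ≤ (3 * volB / (ϱ+3) * 2^(ϱ+3) * S * 3 * C₀ * P^2 * Ca + 1) * ε ^ (ϱ+3) *
        Real.exp (-δ * ‖v‖^2) * M := by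
        have hex : (0:ℝ) ≤ Real.exp (-δ * ‖v‖^2) := Real.exp_nonneg _
        have : (0:ℝ) ≤ ε ^ (ϱ+3) * Real.exp (-δ * ‖v‖^2) * M := by positivity
        nlinarith
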